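/- The set 𝔱 = {A ∈ 𝔰𝔬(h) : [A, 𝔰𝔭₁] ⊆ 𝔰𝔭₁} equals 𝔰𝔭₁ ⊕ 𝔱₀ where 𝔱₀ = {A ∈ 𝔰𝔬(h) : [A, 𝔰𝔭₁] = 0}; that is, a skew-symmetric operator whose bracket with the quaternionic 𝔰𝔭₁ stays in 𝔰𝔭₁ decomposes uniquely as a sum of an element of 𝔰𝔭₁ and an element commuting with all of 𝔰𝔭₁. -/

import Mathlib

open Matrix

set_option maxHeartbeats 2000000 in
/-- A skew-symmetric operator `A` satisfies `[A, 𝔰𝔭₁] ⊆ 𝔰𝔭₁` if and only if it decomposes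
uniquely as `A = B + C` with `B ∈ 𝔰𝔭₁` (the span of `J₁, J₂, J₃`) and `C` skew-symmetric
commuting with all of `𝔰𝔭₁`; i.e. `𝔱 = 𝔰𝔭₁ ⊕ 𝔱₀`. -/
theorem t_eq_sp1_oplus_t0 {n m : ℕ} (hn : n = 4 * m)
    (J : Fin 3 → Matrix (Fin n) (Fin n) ℝ)
    (hskewJ : ∀ a, (J a)ᵀ = -(J a))
    (hsq : ∀ a, J a * J a = -1)
    (hantiJ : ∀ a b, a ≠ b → J a * J b = -(J b * J a))
    (h123 : J 0 * J 1 * J 2 = -1) :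
    ∀ A : Matrix (Fin n) (Fin n) ℝ, Aᵀ = -A →
      ((∀ a, A * J a - J a * A ∈ Submodule.span ℝ
          ({J 0, J 1, J 2} : Set (Matrix (Fin n) (Fin n) ℝ))) ↔
        ∃! p : Matrix (Fin n) (Fin n) ℝ × Matrix (Fin n) (Fin n) ℝ,
          A = p.1 + p.2 ∧
          p.1 ∈ Submodule.span ℝ
            ({J 0, J 1, J 2} : Set (Matrix (Fin n) (Fin n) ℝ)) ∧
          (p.2)ᵀ = -(p.2) ∧ ∀ a, p.2 * J a = J a * p.2) := by
  intro A hA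
  set S : Submodule ℝ (Matrix (Fin n) (Fin n) ℝ) :=
    Submodule.span ℝ ({J 0, J 1, J 2} : Set (Matrix (Fin n) (Fin n) ℝ)) with hS
  -- trivial case n = 0
  rcases Nat.eq_zero_or_pos n with h0 | hpos
  · have hsub : Subsingleton (Matrix (Fin n) (Fin n) ℝ) := by
      subst h0; exact ⟨fun a b => funext fun i => i.elim0⟩
    constructor
    · intro _
      refine ⟨(0, 0), ⟨Subsingleton.elim _ _, Submodule.zero_mem _,
        Subsingleton.elim _ _, fun a => Subsingleton.elim _ _⟩, fun q hq => ?_⟩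
      exact Prod.ext (Subsingleton.elim _ _) (Subsingleton.elim _ _)
    · intro _ a
      have : A * J a - J a * A = 0 := Subsingleton.elim _ _
      rw [this]; exact Submodule.zero_mem _
  -- main case
  have hn0 : (n : ℝ) ≠ 0 := Nat.cast_ne_zero.mpr hpos.ne'
  -- multiplication table
  have m01 : J 0 * J 1 = J 2 := by
    have h : J 0 * J 1 * J 2 * J 2 = (-1) * J 2 := by rw [h123]
    rw [mul_assoc, hsq 2] at h
    simpa using h
  have m02 : J 0 * J 2 = -(J 1) := by
    rw [← m01, ← mul_assoc, hsq 0]; simp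
  have m12 : J 1 * J 2 = J 0 := by
    have h : J 0 * (J 0 * J 1 * J 2) = J 0 * (-1) := by rw [h123]
    rw [← mul_assoc, ← mul_assoc, hsq 0] at h
    simp only [neg_one_mul, neg_mul, mul_neg_one, one_mul] at h
    exact neg_inj.mp h
  have m10 : J 1 * J 0 = -(J 2) := by
    rw [hantiJ 1 0 (by decide), m01]
  have m20 : J 2 * J 0 = J 1 := by
    rw [hantiJ 2 0 (by decide), m02]; simp
  have m21 : J 2 * J 1 = -(J 0) := by
    rw [hantiJ 2 1 (by decide), m12]
  -- trace lemmas
  have trskew : ∀ X : Matrix (Fin n) (Fin n) ℝ, Xᵀ = -X → trace X = 0 := by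
    intro X hX
    have h1 : trace Xᵀ = trace X := Matrix.trace_transpose X
    rw [hX, Matrix.trace_neg] at h1
    linarith
  have trJJ : ∀ a b : Fin 3, a ≠ b → trace (J a * J b) = 0 := by
    intro a b hab
    apply trskew
    rw [Matrix.transpose_mul, hskewJ, hskewJ, neg_mul_neg, hantiJ b a (Ne.symm hab)]
  have trJJs : ∀ a : Fin 3, trace (J a * J a) = -(n : ℝ) := by
    intro a
    rw [hsq a, Matrix.trace_neg, Matrix.trace_one]
    simp
  have t00 := trJJs 0
  have t11 := trJJs 1
  have t22 := trJJs 2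
  have t01 := trJJ 0 1 (by decide)
  have t02 := trJJ 0 2 (by decide)
  have t10 := trJJ 1 0 (by decide)
  have t12 := trJJ 1 2 (by decide)
  have t20 := trJJ 2 0 (by decide)
  have t21 := trJJ 2 1 (by decide)
  -- extraction from span
  have extract : ∀ X : Matrix (Fin n) (Fin n) ℝ, X ∈ S →
      ∃ c0 c1 c2 : ℝ, X = c0 • J 0 + c1 • J 1 + c2 • J 2 := by
    intro X hX
    rw [hS, Submodule.mem_span_insert] at hX
    obtain ⟨c0, z, hz, rfl⟩ := hX
    rw [Submodule.mem_span_insert] at hz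
    obtain ⟨c1, w, hw, rfl⟩ := hz
    rw [Submodule.mem_span_singleton] at hw
    obtain ⟨c2, rfl⟩ := hw
    exact ⟨c0, c1, c2, by module⟩
  have memJ : ∀ a : Fin 3, J a ∈ S := by
    intro a
    apply Submodule.subset_span
    fin_cases a <;> simp
  -- the trace pairing identity
  have hpair : ∀ a b : Fin 3,
      trace (J a * (A * J b - J b * A)) + trace (J b * (A * J a - J a * A)) = 0 := by
    intro a b
    simp only [mul_sub, Matrix.trace_sub, ← mul_assoc]
    rw [Matrix.trace_mul_cycle (J a) A (J b), Matrix.trace_mul_cycle (J b) A (J a)]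
    ring
  -- coefficient extraction by trace
  have coeff : ∀ a : Fin 3, ∀ c0 c1 c2 : ℝ,
      trace (J a * (c0 • J 0 + c1 • J 1 + c2 • J 2)) =
        -(n : ℝ) * ![c0, c1, c2] a := by
    intro a c0 c1 c2
    fin_cases a <;>
      simp [mul_add, mul_smul_comm, Matrix.trace_add, Matrix.trace_smul,
        t00, t01, t02, t10, t11, t12, t20, t21, t22, smul_eq_mul] <;> ring
  constructor
  · -- forward direction
    intro hmem
    obtain ⟨x0, x1, x2, hx⟩ := extract _ (hmem 0)
    obtain ⟨y0, y1, y2, hy⟩ := extract _ (hmem 1)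
    obtain ⟨z0, z1, z2, hz⟩ := extract _ (hmem 2)
    -- diagonal coefficients vanish
    have hxx : ∀ a : Fin 3, trace (J a * (A * J a - J a * A)) = 0 := by
      intro a; have := hpair a a; linarith
    have hx0 : x0 = 0 := by
      have h := hxx 0; rw [hx, coeff] at h
      simpa [hn0] using h
    have hy1 : y1 = 0 := by
      have h := hxx 1; rw [hy, coeff] at h
      simpa [hn0] using h
    have hz2 : z2 = 0 := by
      have h := hxx 2; rw [hz, coeff] at h
      simpa [hn0] using h
    -- antisymmetry of cross coefficients
    have hy0 : y0 = -x1 := by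
      have h := hpair 1 0; rw [hx, hy, coeff, coeff] at h
      have : (n : ℝ) * (x1 + y0) = 0 := by
        simp at h; linarith
      have := mul_eq_zero.mp this
      rcases this with h' | h'
      · exact absurd h' hn0
      · linarith
    have hz0 : z0 = -x2 := by
      have h := hpair 2 0; rw [hx, hz, coeff, coeff] at h
      have : (n : ℝ) * (x2 + z0) = 0 := by
        simp at h; linarith
      rcases mul_eq_zero.mp this with h' | h'
      · exact absurd h' hn0
      · linarith
    have hz1 : z1 = -y2 := by
      have h := hpair 2 1; rw [hy, hz, coeff, coeff] at h
      have : (n : ℝ) * (y2 + z1) = 0 := by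
        simp at h; linarith
      rcases mul_eq_zero.mp this with h' | h'
      · exact absurd h' hn0
      · linarith
    -- the sp1 part
    obtain ⟨B, hB⟩ : ∃ B : Matrix (Fin n) (Fin n) ℝ,
        B = (2⁻¹ * y2) • J 0 + (2⁻¹ * (-x2)) • J 1 + (2⁻¹ * x1) • J 2 := ⟨_, rfl⟩
    have hBmem : B ∈ S := by
      rw [hB]
      apply Submodule.add_mem _ (Submodule.add_mem _ _ _) _ <;>
        exact Submodule.smul_mem _ _ (memJ _)
    -- B has the same brackets as A
    have hc0 : A * J 0 - J 0 * A = B * J 0 - J 0 * B := by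
      rw [hx, hx0, hB]
      simp only [add_mul, mul_add, smul_mul_assoc, mul_smul_comm,
        hsq 0, m10, m20, m01, m02]
      module
    have hc1 : A * J 1 - J 1 * A = B * J 1 - J 1 * B := by
      rw [hy, hy1, hy0, hB]
      simp only [add_mul, mul_add, smul_mul_assoc, mul_smul_comm,
        hsq 1, m01, m21, m10, m12]
      module
    have hc2 : A * J 2 - J 2 * A = B * J 2 - J 2 * B := by
      rw [hz, hz2, hz0, hz1, hB]
      simp only [add_mul, mul_add, smul_mul_assoc, mul_smul_comm,
        hsq 2, m02, m12, m20, m21]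
      module
    have hcomm : ∀ a : Fin 3, (A - B) * J a = J a * (A - B) := by
      intro a
      rw [sub_mul, mul_sub, sub_eq_sub_iff_sub_eq_sub]
      fin_cases a
      · exact hc0
      · exact hc1
      · exact hc2
    have hBskew : Bᵀ = -B := by
      rw [hB]
      simp only [Matrix.transpose_add, Matrix.transpose_smul, hskewJ]
      module
    refine ⟨(B, A - B), ⟨by show A = B + (A - B); abel, hBmem, ?_, hcomm⟩, ?_⟩
    · rw [Matrix.transpose_sub, hA, hBskew]; exact (neg_sub_neg A B).trans (neg_sub A B).symm
    · rintro ⟨B', C'⟩ ⟨hsum', hmem', hskew', hcomm'⟩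
      simp only at hsum' hmem' hskew' hcomm' ⊢
      -- D = B - B' is in S and commutes with every J a; show D = 0
      have hC' : C' = A - B' := by rw [hsum']; abel
      have hDcomm : ∀ a : Fin 3, (B - B') * J a = J a * (B - B') := by
        intro a
        have h1 := hcomm a
        have h2 := hcomm' a
        rw [hC'] at h2
        rw [sub_mul, mul_sub] at h1 h2 ⊢
        have : A * J a - B * J a = J a * A - J a * B := h1
        have h2' : A * J a - B' * J a = J a * A - J a * B' := h2
        -- subtract
        have := congrArg₂ (fun X Y => Y - X) h1 h2
        simpa [sub_sub_sub_cancel_left] using this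
      obtain ⟨d0, d1, d2, hD⟩ := extract (B - B')
        (Submodule.sub_mem _ hBmem hmem')
      have hbr0 : (B - B') * J 0 - J 0 * (B - B') = (2 * d2) • J 1 + (-2 * d1) • J 2 := by
        rw [hD]
        simp only [add_mul, mul_add, smul_mul_assoc, mul_smul_comm,
          hsq 0, m10, m20, m01, m02]
        module
      have hbr1 : (B - B') * J 1 - J 1 * (B - B') = (-2 * d2) • J 0 + (2 * d0) • J 2 := by
        rw [hD]
        simp only [add_mul, mul_add, smul_mul_assoc, mul_smul_comm,
          hsq 1, m01, m21, m10, m12]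
        module
      have hz0' : (2 * d2) • J 1 + (-2 * d1) • J 2 = 0 := by
        rw [← hbr0, hDcomm 0]; abel
      have hz1' : (-2 * d2) • J 0 + (2 * d0) • J 2 = 0 := by
        rw [← hbr1, hDcomm 1]; abel
      have hd2 : d2 = 0 := by
        have h := congrArg (fun X => trace (J 1 * X)) hz0'
        simp only [mul_zero, Matrix.trace_zero, mul_add, mul_smul_comm,
          Matrix.trace_add, Matrix.trace_smul, t11, t12, smul_eq_mul] at h
        have : (2 * d2) * -(n : ℝ) = 0 := by linarith
        rcases mul_eq_zero.mp this with h' | h'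
        · linarith
        · exact absurd (neg_eq_zero.mp h') hn0
      have hd1 : d1 = 0 := by
        have h := congrArg (fun X => trace (J 2 * X)) hz0'
        simp only [mul_zero, Matrix.trace_zero, mul_add, mul_smul_comm,
          Matrix.trace_add, Matrix.trace_smul, t21, t22, smul_eq_mul] at h
        have : (-2 * d1) * -(n : ℝ) = 0 := by linarith
        rcases mul_eq_zero.mp this with h' | h'
        · linarith
        · exact absurd (neg_eq_zero.mp h') hn0
      have hd0 : d0 = 0 := by
        have h := congrArg (fun X => trace (J 2 * X)) hz1'
        simp only [mul_zero, Matrix.trace_zero, mul_add, mul_smul_comm,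
          Matrix.trace_add, Matrix.trace_smul, t20, t22, smul_eq_mul] at h
        have : (2 * d0) * -(n : ℝ) = 0 := by linarith
        rcases mul_eq_zero.mp this with h' | h'
        · linarith
        · exact absurd (neg_eq_zero.mp h') hn0
      have hBB : B' = B := by
        have : B - B' = 0 := by rw [hD, hd0, hd1, hd2]; simp
        have := sub_eq_zero.mp this
        exact this.symm
      have hCC : C' = A - B := by rw [hC', hBB]
      exact Prod.ext hBB hCC
  · -- reverse direction
    rintro ⟨⟨B, C⟩, ⟨hsum, hmem, hskew', hcomm⟩, _⟩ a
    simp only at hsum hmem hskew' hcomm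
    obtain ⟨b0, b1, b2, hBe⟩ := extract _ hmem
    have key : A * J a - J a * A = B * J a - J a * B := by
      rw [hsum, add_mul, mul_add]
      have := hcomm a
      rw [this]
      abel
    rw [key, hBe]
    fin_cases a
    · show (b0 • J 0 + b1 • J 1 + b2 • J 2) * J 0 - J 0 * (b0 • J 0 + b1 • J 1 + b2 • J 2) ∈ S
      have h : (b0 • J 0 + b1 • J 1 + b2 • J 2) * J 0 - J 0 * (b0 • J 0 + b1 • J 1 + b2 • J 2) =
        (2 * b2) • J 1 + (-2 * b1) • J 2 := by
        simp only [add_mul, mul_add, smul_mul_assoc, mul_smul_comm,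
          hsq 0, m10, m20, m01, m02]
        module
      rw [h]
      exact Submodule.add_mem _ (Submodule.smul_mem _ _ (memJ 1))
        (Submodule.smul_mem _ _ (memJ 2))
    · show (b0 • J 0 + b1 • J 1 + b2 • J 2) * J 1 - J 1 * (b0 • J 0 + b1 • J 1 + b2 • J 2) ∈ S
      have h : (b0 • J 0 + b1 • J 1 + b2 • J 2) * J 1 - J 1 * (b0 • J 0 + b1 • J 1 + b2 • J 2) =
        (-2 * b2) • J 0 + (2 * b0) • J 2 := by
        simp only [add_mul, mul_add, smul_mul_assoc, mul_smul_comm,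
          hsq 1, m01, m21, m10, m12]
        module
      rw [h]
      exact Submodule.add_mem _ (Submodule.smul_mem _ _ (memJ 0))
        (Submodule.smul_mem _ _ (memJ 2))
    · show (b0 • J 0 + b1 • J 1 + b2 • J 2) * J 2 - J 2 * (b0 • J 0 + b1 • J 1 + b2 • J 2) ∈ S
      have h : (b0 • J 0 + b1 • J 1 + b2 • J 2) * J 2 - J 2 * (b0 • J 0 + b1 • J 1 + b2 • J 2) =
        (2 * b1) • J 0 + (-2 * b0) • J 1 := by
        simp only [add_mul, mul_add, smul_mul_assoc, mul_smul_comm,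
          hsq 2, m02, m12, m20, m21]
        module
      rw [h]
      exact Submodule.add_mem _ (Submodule.smul_mem _ _ (memJ 0))
        (Submodule.smul_mem _ _ (memJ 1))
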